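/- If G is the wheel graph obtained by joining a new vertex to every vertex of a cycle C_{n−1} (n ≥ 5), then σ(G) = 3. -/

import Mathlib

/-! Surrounding Cops and Robbers.

Game state: positions of the `k` cops (`Fin k → V`) and of the robber (`V`),
with the cops to move.  On the cops' turn each cop may stay or move along an
edge; the cops win immediately if every neighbour of the robber's vertex is
occupied by a cop.  Otherwise the robber must stay or move along an edge,
ending on a vertex not occupied by any cop (in particular, if a cop lands on
the robber's vertex he is compelled to move off it).  `CopsWin` is the least
fixed point expressing that the cops can force a win in finitely many moves. -/

namespace SurroundGame

variable {V : Type*} (G : SimpleGraph V)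

/-- One legal simultaneous move of the cops: each cop stays or moves along an edge. -/
def CopsMove {k : ℕ} (c c' : Fin k → V) : Prop :=
  ∀ i, c' i = c i ∨ G.Adj (c i) (c' i)

/-- One legal move of the robber (ignoring cop positions): stay or move along an edge. -/
def RobberMove (r r' : V) : Prop :=
  r' = r ∨ G.Adj r r'

/-- The robber at `r` is surrounded: every neighbour of `r` is occupied by a cop. -/
def Surrounded {k : ℕ} (c : Fin k → V) (r : V) : Prop :=
  ∀ w, G.Adj r w → ∃ i, c i = w

/-- With cops at `c`, robber at `r` and the cops to move, the cops can force a win: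
they make a legal move after which either the robber is surrounded, or every legal
robber response (to a vertex free of cops) leads to a position where they again win. -/
inductive CopsWin : {k : ℕ} → (Fin k → V) → V → Prop
  | surround {k : ℕ} (c : Fin k → V) (r : V) (c' : Fin k → V)
      (hmove : CopsMove G c c')
      (hsur : Surrounded G c' r) :
      CopsWin c r
  | step {k : ℕ} (c : Fin k → V) (r : V) (c' : Fin k → V)
      (hmove : CopsMove G c c')
      (hnext : ∀ r', RobberMove G r r' → (∀ i, c' i ≠ r') → CopsWin c' r') :
      CopsWin c r

/-- `k` cops have a winning strategy on `G`: they have an initial placement such that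
whatever starting vertex (unoccupied by cops) the robber picks, the cops win. -/
def CopsWinWith (k : ℕ) : Prop :=
  ∃ c : Fin k → V, ∀ r : V, (∀ i, c i ≠ r) → CopsWin G c r

/-- The surrounding cop number: the least number of cops with a winning strategy. -/
noncomputable def surroundNumber : ℕ :=
  sInf {k | CopsWinWith G k}

end SurroundGame


open SurroundGame

/-- The wheel graph: a cycle `C_m` together with a universal vertex (`none`). -/
def wheelGraph (m : ℕ) : SimpleGraph (Option (Fin m)) :=
  SimpleGraph.fromRel (fun x y =>
    x = none ∨ ∃ i j, x = some i ∧ y = some j ∧ (SimpleGraph.cycleGraph m).Adj i j)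

section Aux

open SimpleGraph
open Fin.CommRing

/- ### Arithmetic helpers in `Fin (k+4)` -/

private lemma modh (m a : ℕ) (h1 : m ≤ a) (h2 : a < 2*m) : a % m = a - m := by
  rw [Nat.mod_eq_sub_mod h1, Nat.mod_eq_of_lt (by omega)]

private lemma vone (k : ℕ) : (1 : Fin (k+4)).val = 1 := rfl

private lemma vsub1 (k : ℕ) (x : Fin (k+4)) (h : 1 ≤ x.val) : (x - 1).val = x.val - 1 := by
  rw [Fin.sub_def]
  simp only [Fin.val_one, Fin.val_mk]
  rw [modh _ _ (by omega) (by have := x.isLt; omega)]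
  omega

private lemma vadd1 (k : ℕ) (x : Fin (k+4)) (h : x.val < k + 3) : (x + 1).val = x.val + 1 := by
  rw [Fin.add_def]
  simp only [Fin.val_one, Fin.val_mk]
  rw [Nat.mod_eq_of_lt (by omega)]

private lemma vne (k : ℕ) (a r : Fin (k+4)) (h : a ≠ r) : 1 ≤ (r - a).val := by
  have h2 : r - a ≠ 0 := sub_ne_zero.mpr (Ne.symm h)
  rcases Nat.eq_zero_or_pos (r - a).val with h3 | h3
  · exact absurd (Fin.ext (h3.trans (Fin.val_zero _).symm)) h2
  · exact h3

private lemma veq (k : ℕ) (x y : Fin (k+4)) (h : (x - y).val = 1) : x = y + 1 := by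
  have hxy : x - y = 1 := Fin.ext (by rw [h, vone])
  have h2 := sub_eq_iff_eq_add.mp hxy
  rw [h2]; ring

private lemma vtwo (k : ℕ) : (2 : Fin (k+4)).val = 2 := by
  rw [← one_add_one_eq_two, vadd1 k 1 (by rw [vone]; omega), vone]

private lemma add_one_ne_sub_one (k : ℕ) (j : Fin (k+4)) : j + 1 ≠ j - 1 := by
  intro h
  have h1 : (2 : Fin (k+4)) = 0 := by
    have h2 : j + 1 - (j - 1) = 2 := by ring
    rw [← h2, h, sub_self]
  have := congrArg Fin.val h1
  rw [vtwo k, Fin.val_zero] at this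
  exact absurd this (by omega)

/- ### Wheel graph adjacency -/

private lemma wheel_adj_none {m : ℕ} (i : Fin m) : (wheelGraph m).Adj none (some i) := by
  rw [wheelGraph, fromRel_adj]
  exact ⟨by simp, Or.inl (Or.inl rfl)⟩

private lemma wheel_adj_some_iff {m : ℕ} (i : Fin m) (w : Option (Fin m)) :
    (wheelGraph m).Adj (some i) w ↔ w = none ∨ ∃ j, w = some j ∧ (cycleGraph m).Adj i j := by
  rw [wheelGraph, fromRel_adj]
  constructor
  · rintro ⟨hne, h | h⟩
    · rcases h with h | ⟨i', j', hi, hw, hadj⟩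
      · exact absurd h (by simp)
      · exact Or.inr ⟨j', hw, by cases hi; exact hadj⟩
    · rcases h with h | ⟨i', j', hw, hi, hadj⟩
      · exact Or.inl h
      · exact Or.inr ⟨i', hw, by cases hi; exact hadj.symm⟩
  · rintro (rfl | ⟨j, rfl, hadj⟩)
    · exact ⟨by simp, Or.inr (Or.inl rfl)⟩
    · exact ⟨by simpa using hadj.ne, Or.inl (Or.inr ⟨i, j, rfl, rfl, hadj⟩)⟩

private lemma wheel_adj_some_some {m : ℕ} (i j : Fin m) :
    (wheelGraph m).Adj (some i) (some j) ↔ (cycleGraph m).Adj i j := by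
  rw [wheel_adj_some_iff]; simp

private lemma cyc_adj_right (k : ℕ) (r : Fin (k+4)) : (cycleGraph (k+4)).Adj r (r+1) := by
  rw [cycleGraph_adj']
  right
  have h : r + 1 - r = 1 := by ring
  rw [h, vone]

private lemma cyc_adj_left (k : ℕ) (r : Fin (k+4)) : (cycleGraph (k+4)).Adj r (r-1) := by
  rw [cycleGraph_adj']
  left
  have h : r - (r - 1) = 1 := by ring
  rw [h, vone]

/- ### Three cops win: the chase lemma -/

private lemma chase (k : ℕ) : ∀ (N : ℕ) (a b r : Fin (k+4)),
    (r-a).val + (b-r).val ≤ N → a ≠ r → b ≠ r →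
    CopsWin (wheelGraph (k+4)) ![none, some a, some b] (some r) := by
  intro N
  induction N with
  | zero =>
    intro a b r hN h1 h2
    have := vne k a r h1
    omega
  | succ N ih =>
    intro a b r hN h1 h2
    have hd1 : 1 ≤ (r - a).val := vne k a r h1
    have hd2 : 1 ≤ (b - r).val := vne k r b (Ne.symm h2)
    by_cases hboth : (r - a).val = 1 ∧ (b - r).val = 1
    · refine CopsWin.surround _ _ ![none, some a, some b] (fun i => Or.inl rfl) ?_
      intro w hw
      rw [wheel_adj_some_iff] at hw
      rcases hw with rfl | ⟨j, rfl, hadj⟩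
      · exact ⟨0, rfl⟩
      · rw [cycleGraph_adj'] at hadj
        rcases hadj with h | h
        · have hra : r = a + 1 := veq k r a hboth.1
          have hrj : r = j + 1 := veq k r j h
          have haj : a = j := add_right_cancel (hra.symm.trans hrj)
          exact ⟨1, by show some a = some j; rw [haj]⟩
        · have hbr : b = r + 1 := veq k b r hboth.2
          have hjr : j = r + 1 := veq k j r h
          exact ⟨2, by show some b = some j; rw [hbr, hjr]⟩
    · have hdc : 2 ≤ (r-a).val ∨ 2 ≤ (b-r).val := by omega
      set a' := if 2 ≤ (r-a).val then a + 1 else a with ha'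
      set b' := if 2 ≤ (b-r).val then b - 1 else b with hb'
      have he1 : (r - a').val = if 2 ≤ (r-a).val then (r-a).val - 1 else (r-a).val := by
        rw [ha']
        split_ifs with h
        · have hrw : r - (a + 1) = (r - a) - 1 := by ring
          rw [hrw, vsub1 k _ (by omega)]
        · rfl
      have he2 : (b' - r).val = if 2 ≤ (b-r).val then (b-r).val - 1 else (b-r).val := by
        rw [hb']
        split_ifs with h
        · have hrw : (b - 1) - r = (b - r) - 1 := by ring
          rw [hrw, vsub1 k _ (by omega)]
        · rfl
      have hlt1 := (r - a).isLt
      have hlt2 := (b - r).isLt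
      have he1' : 1 ≤ (r - a').val ∧ (r - a').val ≤ k + 2 := by
        rw [he1]; split_ifs with h <;> omega
      have he2' : 1 ≤ (b' - r).val ∧ (b' - r).val ≤ k + 2 := by
        rw [he2]; split_ifs with h <;> omega
      have hsum : (r - a').val + (b' - r).val + 1 ≤ (r-a).val + (b-r).val := by
        rw [he1, he2]
        rcases hdc with h | h <;> split_ifs <;> omega
      refine CopsWin.step _ _ ![none, some a', some b'] ?_ ?_
      · intro i
        fin_cases i
        · exact Or.inl rfl
        · show some a' = some a ∨ (wheelGraph (k+4)).Adj (some a) (some a')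
          rw [ha']
          split_ifs with h
          · exact Or.inr ((wheel_adj_some_some a (a+1)).mpr (cyc_adj_right k a))
          · exact Or.inl rfl
        · show some b' = some b ∨ (wheelGraph (k+4)).Adj (some b) (some b')
          rw [hb']
          split_ifs with h
          · exact Or.inr ((wheel_adj_some_some b (b-1)).mpr (cyc_adj_left k b))
          · exact Or.inl rfl
      · intro r' hmove hfree
        have hf0 : (none : Option (Fin (k+4))) ≠ r' := hfree 0
        have hfa : some a' ≠ r' := hfree 1
        have hfb : some b' ≠ r' := hfree 2
        have hr' : r' = some r ∨ r' = some (r+1) ∨ r' = some (r-1) := by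
          rcases hmove with h | h
          · exact Or.inl h
          · rw [wheel_adj_some_iff] at h
            rcases h with rfl | ⟨j, rfl, hadj⟩
            · exact absurd rfl hf0
            · rw [cycleGraph_adj'] at hadj
              rcases hadj with h | h
              · have hrj : r = j + 1 := veq k r j h
                have hjr : j = r - 1 := by rw [hrj]; ring
                exact Or.inr (Or.inr (by rw [hjr]))
              · have hjr : j = r + 1 := veq k j r h
                exact Or.inr (Or.inl (by rw [hjr]))
        rcases hr' with rfl | rfl | rfl
        · exact ih a' b' r (by omega)
            (fun h => hfa (congrArg some h)) (fun h => hfb (congrArg some h))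
        · have ha2 : a' ≠ r + 1 := fun h => hfa (congrArg some h)
          have hb2 : b' ≠ r + 1 := fun h => hfb (congrArg some h)
          have hv1 : (r + 1 - a').val = (r - a').val + 1 := by
            have hrw : r + 1 - a' = (r - a') + 1 := by ring
            rw [hrw, vadd1 k _ (by omega)]
          have hne2 : (b' - r).val ≠ 1 := fun h => hb2 (veq k b' r h)
          have hv2 : (b' - (r+1)).val = (b' - r).val - 1 := by
            have hrw : b' - (r + 1) = (b' - r) - 1 := by ring
            rw [hrw, vsub1 k _ (by omega)]
          exact ih a' b' (r+1) (by omega) ha2 hb2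
        · have ha2 : a' ≠ r - 1 := fun h => hfa (congrArg some h)
          have hb2 : b' ≠ r - 1 := fun h => hfb (congrArg some h)
          have hne1 : (r - a').val ≠ 1 := by
            intro h
            have hra : r = a' + 1 := veq k r a' h
            exact ha2 (by rw [hra]; ring)
          have hv1 : (r - 1 - a').val = (r - a').val - 1 := by
            have hrw : r - 1 - a' = (r - a') - 1 := by ring
            rw [hrw, vsub1 k _ (by omega)]
          have hv2 : (b' - (r-1)).val = (b' - r).val + 1 := by
            have hrw : b' - (r - 1) = (b' - r) + 1 := by ring
            rw [hrw, vadd1 k _ (by omega)]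
          exact ih a' b' (r-1) (by omega) ha2 hb2

private lemma three_win (k : ℕ) : CopsWinWith (wheelGraph (k+4)) 3 := by
  refine ⟨![none, some 0, some 0], ?_⟩
  intro r hr
  match r with
  | none => exact absurd rfl (hr 0)
  | some j =>
    have hj : (0 : Fin (k+4)) ≠ j := fun h => hr 1 (by show some 0 = some j; rw [h])
    exact chase k ((j - 0).val + ((0:Fin (k+4)) - j).val) 0 0 j le_rfl hj hj

/- ### Two cops cannot win -/

private lemma three_le_of_distinct {kk : ℕ} (i1 i2 i3 : Fin kk)
    (h12 : i1 ≠ i2) (h13 : i1 ≠ i3) (h23 : i2 ≠ i3) : 3 ≤ kk := by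
  have l1 := i1.isLt
  have l2 := i2.isLt
  have l3 := i3.isLt
  have v12 : i1.val ≠ i2.val := fun h => h12 (Fin.ext h)
  have v13 : i1.val ≠ i3.val := fun h => h13 (Fin.ext h)
  have v23 : i2.val ≠ i3.val := fun h => h23 (Fin.ext h)
  omega

private lemma find_free {V : Type*} {kk : ℕ} (hk : kk < 3) (c : Fin kk → V) (v1 v2 v3 : V)
    (h12 : v1 ≠ v2) (h13 : v1 ≠ v3) (h23 : v2 ≠ v3) :
    ∃ t, (t = v1 ∨ t = v2 ∨ t = v3) ∧ ∀ i, c i ≠ t := by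
  by_contra hcon
  push_neg at hcon
  obtain ⟨i1, hi1⟩ := hcon v1 (Or.inl rfl)
  obtain ⟨i2, hi2⟩ := hcon v2 (Or.inr (Or.inl rfl))
  obtain ⟨i3, hi3⟩ := hcon v3 (Or.inr (Or.inr rfl))
  have := three_le_of_distinct i1 i2 i3
    (fun h => h12 (by rw [← hi1, ← hi2, h]))
    (fun h => h13 (by rw [← hi1, ← hi3, h]))
    (fun h => h23 (by rw [← hi2, ← hi3, h]))
  omega

private lemma cops_ge_three (k : ℕ) {kk : ℕ} (c : Fin kk → Option (Fin (k+4)))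
    (r : Option (Fin (k+4))) (h : CopsWin (wheelGraph (k+4)) c r) : 3 ≤ kk := by
  induction h with
  | surround c r c' hmove hsur =>
    match r with
    | none =>
      obtain ⟨i1, hi1⟩ := hsur (some ⟨0, by omega⟩) (wheel_adj_none _)
      obtain ⟨i2, hi2⟩ := hsur (some ⟨1, by omega⟩) (wheel_adj_none _)
      obtain ⟨i3, hi3⟩ := hsur (some ⟨2, by omega⟩) (wheel_adj_none _)
      exact three_le_of_distinct i1 i2 i3
        (fun h => by rw [h, hi2] at hi1; simp [Fin.ext_iff] at hi1)
        (fun h => by rw [h, hi3] at hi1; simp [Fin.ext_iff] at hi1)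
        (fun h => by rw [h, hi3] at hi2; simp [Fin.ext_iff] at hi2)
    | some j =>
      obtain ⟨i1, hi1⟩ := hsur none ((wheel_adj_none j).symm)
      obtain ⟨i2, hi2⟩ := hsur (some (j+1))
        ((wheel_adj_some_some j (j+1)).mpr (cyc_adj_right k j))
      obtain ⟨i3, hi3⟩ := hsur (some (j-1))
        ((wheel_adj_some_some j (j-1)).mpr (cyc_adj_left k j))
      refine three_le_of_distinct i1 i2 i3
        (fun h => by rw [h, hi2] at hi1; simp [Fin.ext_iff] at hi1)
        (fun h => by rw [h, hi3] at hi1; simp [Fin.ext_iff] at hi1)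
        (fun h => ?_)
      rw [h, hi3] at hi2
      exact add_one_ne_sub_one k j (Option.some_injective _ hi2.symm)
  | step c r c' hmove hnext ih =>
    by_cases h3 : 3 ≤ kk
    · exact h3
    · push_neg at h3
      match r with
      | none =>
        obtain ⟨t, ht, hfree⟩ := find_free h3 c'
          (some (⟨0, by omega⟩ : Fin (k+4))) (some ⟨1, by omega⟩) (some ⟨2, by omega⟩)
          (by simp [Fin.ext_iff]) (by simp [Fin.ext_iff]) (by simp [Fin.ext_iff])
        refine ih t ?_ hfree
        rcases ht with rfl | rfl | rfl <;> exact Or.inr (wheel_adj_none _)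
      | some j =>
        obtain ⟨t, ht, hfree⟩ := find_free h3 c'
          (none : Option (Fin (k+4))) (some (j+1)) (some (j-1))
          (by simp) (by simp)
          (fun h => add_one_ne_sub_one k j (Option.some_injective _ h))
        refine ih t ?_ hfree
        rcases ht with rfl | rfl | rfl
        · exact Or.inr ((wheel_adj_none j).symm)
        · exact Or.inr ((wheel_adj_some_some j (j+1)).mpr (cyc_adj_right k j))
        · exact Or.inr ((wheel_adj_some_some j (j-1)).mpr (cyc_adj_left k j))

private lemma not_win_lt_three (k : ℕ) {kk : ℕ} (hkk : kk < 3)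
    (h : CopsWinWith (wheelGraph (k+4)) kk) : False := by
  obtain ⟨c, hc⟩ := h
  obtain ⟨t, _, hfree⟩ := find_free hkk c
    (some (⟨0, by omega⟩ : Fin (k+4))) (some ⟨1, by omega⟩) (some ⟨2, by omega⟩)
    (by simp [Fin.ext_iff]) (by simp [Fin.ext_iff]) (by simp [Fin.ext_iff])
  have := cops_ge_three k c t (hc t hfree)
  omega

private lemma wheel_surround (k : ℕ) : surroundNumber (wheelGraph (k+4)) = 3 := by
  have h3 := three_win k
  refine le_antisymm (Nat.sInf_le h3) (le_csInf ⟨3, h3⟩ ?_)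
  intro b hb
  by_contra hlt
  exact not_win_lt_three k (by omega) hb

end Aux

/-- The wheel on `n ≥ 5` vertices (a universal vertex joined to `C_{n-1}`) has
surrounding cop number `3`. -/
theorem surroundNumber_wheel (n : ℕ) (hn : 5 ≤ n) :
    surroundNumber (wheelGraph (n - 1)) = 3 := by
  have h : n - 1 = (n - 5) + 4 := by omega
  rw [h]
  exact wheel_surround (n - 5)
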